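/- Let R be a finite r-group (r a prime) and let A be a noncyclic abelian p-group (p a prime) acting faithfully on R by automorphisms. If this action is good, then R is generated by the fixed-point subgroups of the nontrivial elements of A, i.e. R = ⟨ C_R(a) : a ∈ A, a ≠ 1 ⟩. -/

import Mathlib

open Pointwise

/-- The subgroup of elements of `G` fixed by every element of a subgroup `B` of `A`. -/
def fixedSubgroup (A G : Type*) [Group A] [Group G] [MulDistribMulAction A G]
    (B : Subgroup A) : Subgroup G where
  carrier := {g | ∀ b ∈ B, b • g = g}
  one_mem' := fun b _ => smul_one b
  mul_mem' := fun {x y} hx hy b hb => by rw [smul_mul', hx b hb, hy b hb]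
  inv_mem' := fun {x} hx b hb => by rw [smul_inv', hx b hb]

/-- The subgroup of elements of `G` fixed by a single element `a` of `A`, i.e. `C_G(a)`. -/
def fixedPointsOf (A G : Type*) [Group A] [Group G] [MulDistribMulAction A G]
    (a : A) : Subgroup G where
  carrier := {g | a • g = g}
  one_mem' := smul_one a
  mul_mem' := fun {x y} hx hy => by
    simp only [Set.mem_setOf_eq] at *; rw [smul_mul', hx, hy]
  inv_mem' := fun {x} hx => by
    simp only [Set.mem_setOf_eq] at *; rw [smul_inv', hx]

/-- The commutator subgroup `[H, B]` for the action of `A` on `G`. -/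
def actionCommutator (A G : Type*) [Group A] [Group G] [MulDistribMulAction A G]
    (H : Subgroup G) (B : Subgroup A) : Subgroup G :=
  Subgroup.closure {x | ∃ h ∈ H, ∃ b ∈ B, x = h⁻¹ * (b • h)}

/-- The action of `A` on `G` is *good* if `H = [H,B] C_H(B)` for every subgroup `B ≤ A`
and every `B`-invariant subgroup `H ≤ G`. -/
def IsGoodAction (A G : Type*) [Group A] [Group G] [MulDistribMulAction A G] : Prop :=
  ∀ (B : Subgroup A) (H : Subgroup G), (∀ b ∈ B, ∀ h ∈ H, b • h ∈ H) →
    (H : Set G) =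
      (actionCommutator A G H B : Set G) * ((H ⊓ fixedSubgroup A G B : Subgroup G) : Set G)


section Helpers

variable {A G : Type*} [Group A] [Group G] [MulDistribMulAction A G]

theorem mem_fixedPointsOf {a : A} {g : G} : g ∈ fixedPointsOf A G a ↔ a • g = g := Iff.rfl

theorem mem_fixedSubgroup {B : Subgroup A} {g : G} :
    g ∈ fixedSubgroup A G B ↔ ∀ b ∈ B, b • g = g := Iff.rfl

theorem actionCommutator_le {H : Subgroup G} {B : Subgroup A}
    (hinv : ∀ b ∈ B, ∀ h ∈ H, b • h ∈ H) : actionCommutator A G H B ≤ H := by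
  refine (Subgroup.closure_le _).2 ?_
  rintro x ⟨h, hh, b, hb, rfl⟩
  exact mul_mem (inv_mem hh) (hinv b hb h hh)

theorem IsGoodAction.decomp (hgood : IsGoodAction A G) {B : Subgroup A} {H : Subgroup G}
    (hinv : ∀ b ∈ B, ∀ h ∈ H, b • h ∈ H) {h : G} (hh : h ∈ H) :
    ∃ c ∈ actionCommutator A G H B, ∃ f ∈ H, (∀ b ∈ B, b • f = f) ∧ h = c * f := by
  have := hgood B H hinv
  have hmem : h ∈ (actionCommutator A G H B : Set G) *
      ((H ⊓ fixedSubgroup A G B : Subgroup G) : Set G) := by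
    rw [← this]; exact hh
  rw [Set.mem_mul] at hmem
  obtain ⟨c, hc, f, hf, hcf⟩ := hmem
  exact ⟨c, hc, f, hf.1, fun b hb => hf.2 b hb, hcf.symm⟩

theorem isGoodAction_of_forall
    (h : ∀ (B : Subgroup A) (H : Subgroup G), (∀ b ∈ B, ∀ h ∈ H, b • h ∈ H) →
      ∀ x ∈ H, ∃ c ∈ actionCommutator A G H B, ∃ f ∈ H, (∀ b ∈ B, b • f = f) ∧ x = c * f) :
    IsGoodAction A G := by
  intro B H hinv
  apply Set.eq_of_subset_of_subset
  · intro x hx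
    obtain ⟨c, hc, f, hf, hfix, rfl⟩ := h B H hinv x hx
    exact Set.mul_mem_mul hc (by exact ⟨hf, hfix⟩)
  · rintro x ⟨c, hc, f, hf, rfl⟩
    exact mul_mem (actionCommutator_le hinv hc) hf.1

end Helpers


section Transfer

variable {A G G' : Type*} [Group A] [Group G] [Group G']
variable [MulDistribMulAction A G] [MulDistribMulAction A G']

/-- Transfer a good action along an injective equivariant homomorphism. -/
theorem isGoodAction_of_injective (ι : G' →* G) (hinj : Function.Injective ι)
    (hequi : ∀ (a : A) (x : G'), ι (a • x) = a • ι x) (hgood : IsGoodAction A G) :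
    IsGoodAction A G' := by
  apply isGoodAction_of_forall
  intro B H' hinv x hx
  have hinvG : ∀ b ∈ B, ∀ h ∈ H'.map ι, b • h ∈ H'.map ι := by
    rintro b hb _ ⟨h, hh, rfl⟩
    exact ⟨b • h, hinv b hb h hh, hequi b h⟩
  obtain ⟨c, hc, f, hf, hfix, hcf⟩ := hgood.decomp hinvG (Subgroup.mem_map_of_mem ι hx)
  have hACmap : actionCommutator A G (H'.map ι) B = (actionCommutator A G' H' B).map ι := by
    unfold actionCommutator
    rw [MonoidHom.map_closure]
    congr 1
    ext y
    constructor
    · rintro ⟨h, ⟨h', hh', rfl⟩, b, hb, rfl⟩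
      exact ⟨h'⁻¹ * (b • h'), ⟨h', hh', b, hb, rfl⟩, by rw [map_mul, map_inv, hequi]⟩
    · rintro ⟨y', ⟨h', hh', b, hb, rfl⟩, rfl⟩
      exact ⟨ι h', ⟨h', hh', rfl⟩, b, hb, by rw [map_mul, map_inv, hequi]⟩
  rw [hACmap] at hc
  obtain ⟨c', hc', rfl⟩ := hc
  obtain ⟨f', hf', rfl⟩ := hf
  refine ⟨c', hc', f', hf', fun b hb => hinj ?_, hinj ?_⟩
  · rw [hequi, hfix b hb]
  · rw [map_mul, ← hcf]

/-- Transfer a good action along a surjective equivariant homomorphism. -/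
theorem isGoodAction_of_surjective (π : G →* G') (hsurj : Function.Surjective π)
    (hequi : ∀ (a : A) (x : G), π (a • x) = a • π x) (hgood : IsGoodAction A G) :
    IsGoodAction A G' := by
  apply isGoodAction_of_forall
  intro B H' hinv x hx
  have hinvG : ∀ b ∈ B, ∀ h ∈ H'.comap π, b • h ∈ H'.comap π := by
    intro b hb h hh
    simp only [Subgroup.mem_comap] at hh ⊢
    rw [hequi]
    exact hinv b hb _ hh
  obtain ⟨y, rfl⟩ := hsurj x
  obtain ⟨c, hc, f, hf, hfix, hcf⟩ := hgood.decomp hinvG (by simpa [Subgroup.mem_comap] using hx)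
  refine ⟨π c, ?_, π f, hf, fun b hb => by rw [← hequi, hfix b hb], by rw [hcf, map_mul]⟩
  have : (actionCommutator A G (H'.comap π) B).map π ≤ actionCommutator A G' H' B := by
    unfold actionCommutator
    rw [MonoidHom.map_closure]
    apply Subgroup.closure_mono
    rintro _ ⟨y', ⟨h, hh, b, hb, rfl⟩, rfl⟩
    exact ⟨π h, hh, b, hb, by rw [map_mul, map_inv, hequi]⟩
  exact this (Subgroup.mem_map_of_mem π hc)

/-- For a good action, fixed points in a quotient lift to fixed points. -/
theorem fixedPointsOf_le_map (π : G →* G') (hsurj : Function.Surjective π)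
    (hequi : ∀ (a : A) (x : G), π (a • x) = a • π x) (hgood : IsGoodAction A G) (a : A) :
    fixedPointsOf A G' a ≤ (fixedPointsOf A G a).map π := by
  intro x hx
  obtain ⟨y, rfl⟩ := hsurj x
  set B := Subgroup.zpowers a with hB
  set H := (fixedPointsOf A G' a).comap π with hH
  have hfixB : ∀ b ∈ B, ∀ z : G', a • z = z → b • z = z := by
    intro b hb z hz
    have : b ∈ MulAction.stabilizer A z := by
      rw [hB] at hb
      exact Subgroup.zpowers_le.mpr (by exact hz) hb
    exact this
  have hinv : ∀ b ∈ B, ∀ h ∈ H, b • h ∈ H := by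
    intro b hb h hh
    simp only [hH, Subgroup.mem_comap, mem_fixedPointsOf] at hh ⊢
    rw [hequi]
    have : a • π h = π h := hh
    rw [hfixB b hb _ this]
    exact this
  have hy : y ∈ H := by simpa [hH, Subgroup.mem_comap, mem_fixedPointsOf] using hx
  obtain ⟨c, hc, f, hf, hfix, rfl⟩ := hgood.decomp hinv hy
  have hπc : π c = 1 := by
    have : c ∈ (actionCommutator A G H B) := hc
    have hle : actionCommutator A G H B ≤ (⊥ : Subgroup G').comap π := by
      apply (Subgroup.closure_le _).2
      rintro _ ⟨h, hh, b, hb, rfl⟩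
      have hhh : a • π h = π h := hh
      show π (h⁻¹ * (b • h)) ∈ (⊥ : Subgroup G')
      rw [map_mul, map_inv, hequi, hfixB b hb _ hhh, inv_mul_cancel]
      exact Subgroup.one_mem _
    simpa [Subgroup.mem_comap, Subgroup.mem_bot] using hle this
  refine ⟨f, ?_, by rw [map_mul, hπc, one_mul]⟩
  exact hfix a (Subgroup.mem_zpowers a)

end Transfer

section Actions

variable {A G : Type*} [Group A] [Group G] [MulDistribMulAction A G]

/-- The restricted action on an invariant subgroup. -/
def subAction (N : Subgroup G) (hN : ∀ (a : A), ∀ x ∈ N, a • x ∈ N) :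
    MulDistribMulAction A N where
  smul a x := ⟨a • (x : G), hN a x x.2⟩
  one_smul x := by ext; exact one_smul A (x : G)
  mul_smul a b x := by ext; exact mul_smul a b (x : G)
  smul_mul a x y := by ext; exact smul_mul' a (x : G) (y : G)
  smul_one a := by ext; exact smul_one a

/-- The induced action on the quotient by an invariant normal subgroup. -/
def quotAction (N : Subgroup G) [N.Normal] (hN : ∀ (a : A), ∀ x ∈ N, a • x ∈ N) :
    MulDistribMulAction A (G ⧸ N) where
  smul a := QuotientGroup.map N N (MulDistribMulAction.toMonoidHom G a)
    (@id (N ≤ N.comap (MulDistribMulAction.toMonoidHom G a)) (fun x hx => hN a x hx))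
  one_smul x := by
    refine QuotientGroup.induction_on x (fun g => ?_)
    show QuotientGroup.map N N _ _ ((g : G ⧸ N)) = (g : G ⧸ N)
    rw [QuotientGroup.map_mk]
    simp [MulDistribMulAction.toMonoidHom_apply]
  mul_smul a b x := by
    refine QuotientGroup.induction_on x (fun g => ?_)
    show QuotientGroup.map N N _ _ ((g : G ⧸ N)) =
      QuotientGroup.map N N _ _ (QuotientGroup.map N N _ _ ((g : G ⧸ N)))
    rw [QuotientGroup.map_mk, QuotientGroup.map_mk, QuotientGroup.map_mk]
    simp [MulDistribMulAction.toMonoidHom_apply, mul_smul]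
  smul_mul a x y := by
    exact (QuotientGroup.map N N (MulDistribMulAction.toMonoidHom G a)
      (fun x hx => hN a x hx)).map_mul x y
  smul_one a := by
    exact (QuotientGroup.map N N (MulDistribMulAction.toMonoidHom G a)
      (fun x hx => hN a x hx)).map_one

end Actions


section ExistsIndep

theorem exists_indep {p : ℕ} (hp : p.Prime) {A : Type*} [Group A] [Finite A]
    (hcomm : ∀ x y : A, x * y = y * x) (hAp : IsPGroup p A) (hnc : ¬ IsCyclic A) :
    ∃ a b : A, orderOf a = p ∧ orderOf b = p ∧
      b ∉ Subgroup.zpowers a ∧ a ∉ Subgroup.zpowers b := by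
  haveI : Fact p.Prime := ⟨hp⟩
  classical
  haveI := Fintype.ofFinite A
  by_contra hcon
  push_neg at hcon
  have hU : ∀ a b : A, orderOf a = p → orderOf b = p → b ∈ Subgroup.zpowers a := by
    intro a b ha hb
    by_contra hmem
    have h2 : a ∈ Subgroup.zpowers b := hcon a b ha hb hmem
    have h1 : Subgroup.zpowers a ≤ Subgroup.zpowers b := Subgroup.zpowers_le.mpr h2
    have hcards : Nat.card (Subgroup.zpowers b) ≤ Nat.card (Subgroup.zpowers a) := by
      rw [Nat.card_zpowers, Nat.card_zpowers, ha, hb]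
    have heq := Subgroup.eq_of_le_of_card_ge h1 hcards
    rw [heq] at hmem
    exact hmem (Subgroup.mem_zpowers b)
  haveI : Nontrivial A := by
    by_contra hn
    rw [not_nontrivial_iff_subsingleton] at hn
    exact hnc inferInstance
  obtain ⟨e, he⟩ := IsPGroup.iff_card.mp hAp
  rw [Nat.card_eq_fintype_card] at he
  have hpd : p ∣ Fintype.card A := by
    rw [he]
    refine dvd_pow_self p ?_
    rintro rfl
    rw [pow_zero] at he
    exact Fintype.one_lt_card.ne' he
  obtain ⟨a₀, ha₀⟩ := exists_prime_orderOf_dvd_card p hpd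
  -- the set of solutions of x^p = 1 is contained in ⟨a₀⟩
  have hΩ1 : ∀ z : A, z ^ p = 1 → z ∈ Subgroup.zpowers a₀ := by
    intro z hz
    rcases eq_or_ne z 1 with rfl | hz1
    · exact Subgroup.one_mem _
    · have : orderOf z ∣ p := orderOf_dvd_of_pow_eq_one hz
      rcases (Nat.Prime.eq_one_or_self_of_dvd hp _ this) with h | h
      · exact absurd (orderOf_eq_one_iff.mp h) hz1
      · exact hU a₀ z ha₀ h
  have hΩ : ∀ k : ℕ, (Finset.univ.filter (fun x : A => x ^ p ^ k = 1)).card ≤ p ^ k := by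
    intro k
    induction k with
    | zero =>
      rw [pow_zero]
      apply Finset.card_le_one.2
      intro x hx y hy
      simp only [Finset.mem_filter, pow_one] at hx hy
      rw [hx.2, hy.2]
    | succ k ih =>
      set φ : A → A := fun x => x ^ p with hφ
      set F := Finset.univ.filter (fun x : A => x ^ p ^ (k + 1) = 1) with hF
      have himg : F.image φ ⊆ Finset.univ.filter (fun x : A => x ^ p ^ k = 1) := by
        intro y hy
        obtain ⟨x, hx, rfl⟩ := Finset.mem_image.mp hy
        simp only [hF, Finset.mem_filter, Finset.mem_univ, true_and] at hx ⊢
        rw [hφ]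
        rw [← pow_mul, ← pow_succ']
        exact hx
      have hfib : ∀ y ∈ F.image φ, (F.filter (fun x => φ x = y)).card ≤ p := by
        intro y hy
        obtain ⟨x₀, hx₀F, hx₀⟩ := Finset.mem_image.mp hy
        have hinj : ((F.filter (fun x => φ x = y)).image (fun x => x * x₀⁻¹)).card
            = (F.filter (fun x => φ x = y)).card :=
          Finset.card_image_of_injective _ (mul_left_injective x₀⁻¹)
        rw [← hinj]
        have hsub : (F.filter (fun x => φ x = y)).image (fun x => x * x₀⁻¹) ⊆
            (Subgroup.zpowers a₀ : Set A).toFinset := by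
          intro z hz
          obtain ⟨x, hx, rfl⟩ := Finset.mem_image.mp hz
          simp only [Finset.mem_filter] at hx
          rw [Set.mem_toFinset]
          apply hΩ1
          have hc : Commute x x₀⁻¹ := hcomm x x₀⁻¹
          rw [hc.mul_pow, inv_pow]
          have hx2 : x ^ p = y := hx.2
          have hx₀2 : x₀ ^ p = y := hx₀
          rw [hx2, hx₀2]
          exact mul_inv_cancel y
        calc ((F.filter (fun x => φ x = y)).image (fun x => x * x₀⁻¹)).card
            ≤ ((Subgroup.zpowers a₀ : Set A).toFinset).card := Finset.card_le_card hsub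
          _ = p := by
              rw [Set.toFinset_card, ← Nat.card_eq_fintype_card, ← ha₀]
              exact Nat.card_zpowers a₀
      calc F.card ≤ p * (F.image φ).card := Finset.card_le_mul_card_image F p hfib
        _ ≤ p * p ^ k := by
            exact Nat.mul_le_mul_left p ((Finset.card_le_card himg).trans ih)
        _ = p ^ (k + 1) := (pow_succ' p k).symm
  apply hnc
  apply isCyclic_of_card_pow_eq_one_le
  intro n hn
  set g := Nat.gcd n (Fintype.card A) with hg
  have hgdvd : g ∣ p ^ e := he ▸ Nat.gcd_dvd_right n (Fintype.card A)
  obtain ⟨k, hk, hgk⟩ := (Nat.dvd_prime_pow hp).mp hgdvd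
  have hsub : Finset.univ.filter (fun x : A => x ^ n = 1) ⊆
      Finset.univ.filter (fun x : A => x ^ p ^ k = 1) := by
    intro x hx
    simp only [Finset.mem_filter, Finset.mem_univ, true_and] at hx ⊢
    apply orderOf_dvd_iff_pow_eq_one.mp
    rw [← hgk]
    exact Nat.dvd_gcd (orderOf_dvd_of_pow_eq_one hx) orderOf_dvd_card
  calc (Finset.univ.filter (fun x : A => x ^ n = 1)).card
      ≤ (Finset.univ.filter (fun x : A => x ^ p ^ k = 1)).card := Finset.card_le_card hsub
    _ ≤ p ^ k := hΩ k
    _ = g := hgk.symm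
    _ ≤ n := Nat.le_of_dvd hn (Nat.gcd_dvd_left n (Fintype.card A))

end ExistsIndep


section BaseCase

/-- The norm/averaging argument over the `p+1` lines of a `C_p × C_p`:
if every nontrivial element of `A` acts without nontrivial fixed points on the
abelian group `R`, and `a, b` generate independent subgroups of order `p`,
then every element of `R` has order dividing `p`. -/
theorem base_pow_eq_one {p : ℕ} (hp : p.Prime) {A R : Type*} [Group A] [Group R]
    [MulDistribMulAction A R]
    (hRcomm : ∀ x y : R, x * y = y * x)
    (hCx : ∀ c : A, c ≠ 1 → ∀ y : R, c • y = y → y = 1)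
    {a b : A} (hcab : a * b = b * a) (hap : a ^ p = 1) (hbp : b ^ p = 1)
    (hba : b ∉ Subgroup.zpowers a) (hab : a ∉ Subgroup.zpowers b)
    (x : R) : x ^ p = 1 := by
  classical
  letI : CommGroup R := { (inferInstance : Group R) with mul_comm := hRcomm }
  haveI : Fact p.Prime := ⟨hp⟩
  haveI : NeZero p := ⟨hp.ne_zero⟩
  haveI : Fact (1 < p) := ⟨hp.one_lt⟩
  have ha1 : a ≠ 1 := fun h => hab (h ▸ Subgroup.one_mem _)
  have hb1 : b ≠ 1 := fun h => hba (h ▸ Subgroup.one_mem _)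
  have hCab : Commute a b := hcab
  have hmod : ∀ (c : A), c ^ p = 1 → ∀ m : ℕ, c ^ (m % p) = c ^ m :=
    fun c hc m => (pow_eq_pow_mod m hc).symm
  have hsucc : ∀ (c : A), c ^ p = 1 → ∀ k : ZMod p, c * c ^ k.val = c ^ ((k + 1 : ZMod p)).val := by
    intro c hc k
    have hv : ((k + 1 : ZMod p)).val = (k.val + 1) % p := by
      rw [ZMod.val_add, ZMod.val_one]
    rw [hv, hmod c hc (k.val + 1), pow_succ']
  -- the norm of any nontrivial `c` with `c^p = 1` kills everything
  have norm : ∀ c : A, c ≠ 1 → c ^ p = 1 → ∀ y : R,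
      (∏ k : ZMod p, (c ^ k.val) • y) = 1 := by
    intro c hc hcp y
    apply hCx c hc
    calc c • (∏ k : ZMod p, (c ^ k.val) • y)
        = ∏ k : ZMod p, c • ((c ^ k.val) • y) :=
          map_prod (MulDistribMulAction.toMonoidHom R c) _ _
      _ = ∏ k : ZMod p, (c ^ ((k + 1 : ZMod p)).val) • y := by
          refine Finset.prod_congr rfl fun k _ => ?_
          rw [smul_smul, hsucc c hcp k]
      _ = ∏ k : ZMod p, (c ^ k.val) • y :=
          Equiv.prod_comp (Equiv.addRight (1 : ZMod p)) (fun k => (c ^ k.val) • y)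
  -- the lines through `a`
  have hline : ∀ i : ZMod p, (∏ k : ZMod p, ((a * b ^ i.val) ^ k.val) • x) = 1 := by
    intro i
    refine norm (a * b ^ i.val) ?_ ?_ x
    · intro h
      have : a = (b ^ i.val)⁻¹ := eq_inv_of_mul_eq_one_left h
      exact hab (this ▸ (Subgroup.zpowers b).inv_mem (Subgroup.pow_mem _ (Subgroup.mem_zpowers b) _))
    · rw [(hCab.pow_right i.val).mul_pow, hap, one_mul, pow_right_comm, hbp, one_pow]
  have hrw : ∀ i k : ZMod p, ((a * b ^ i.val) ^ k.val) • x
      = (a ^ k.val * b ^ ((i * k).val)) • x := by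
    intro i k
    congr 1
    rw [(hCab.pow_right i.val).mul_pow, ← pow_mul]
    congr 1
    rw [ZMod.val_mul]
    exact (hmod b hbp _).symm
  set g : ZMod p → R := fun k => ∏ i : ZMod p, (a ^ k.val * b ^ i.val) • x with hgdef
  have hg0 : g 0 = 1 := by
    have : g 0 = ∏ i : ZMod p, (b ^ i.val) • x := by
      refine Finset.prod_congr rfl fun i _ => ?_
      rw [ZMod.val_zero, pow_zero, one_mul]
    rw [this]
    exact norm b hb1 hbp x
  have hUval : (∏ k : ZMod p, g k) = 1 := by
    apply hCx a ha1
    calc a • (∏ k : ZMod p, g k)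
        = ∏ k : ZMod p, a • g k := map_prod (MulDistribMulAction.toMonoidHom R a) _ _
      _ = ∏ k : ZMod p, g (k + 1) := by
          refine Finset.prod_congr rfl fun k _ => ?_
          rw [hgdef]
          simp only
          calc a • (∏ i : ZMod p, (a ^ k.val * b ^ i.val) • x)
              = ∏ i : ZMod p, a • ((a ^ k.val * b ^ i.val) • x) :=
                map_prod (MulDistribMulAction.toMonoidHom R a) _ _
            _ = ∏ i : ZMod p, (a ^ ((k + 1 : ZMod p)).val * b ^ i.val) • x := by
                refine Finset.prod_congr rfl fun i _ => ?_
                rw [smul_smul, ← mul_assoc, hsucc a hap k]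
      _ = ∏ k : ZMod p, g k := Equiv.prod_comp (Equiv.addRight (1 : ZMod p)) g
  have hk0 : ∀ k : ZMod p, k ≠ 0 →
      (∏ i : ZMod p, (a ^ k.val * b ^ ((i * k).val)) • x) = g k := by
    intro k hk
    exact Equiv.prod_comp (Equiv.mulRight₀ k hk) (fun j => (a ^ k.val * b ^ j.val) • x)
  have hF0 : (∏ i : ZMod p, (a ^ ((0 : ZMod p)).val * b ^ ((i * 0).val)) • x) = x ^ p := by
    have : ∀ i : ZMod p, (a ^ ((0 : ZMod p)).val * b ^ ((i * 0).val)) • x = x := by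
      intro i
      rw [mul_zero, ZMod.val_zero, pow_zero, pow_zero, one_mul, one_smul]
    rw [Finset.prod_congr rfl (fun i _ => this i), Finset.prod_const, Finset.card_univ,
      ZMod.card]
  have hT2 : (1 : R) = x ^ p * ∏ k ∈ ({(0 : ZMod p)}ᶜ : Finset (ZMod p)), g k := by
    calc (1 : R) = ∏ i : ZMod p, ∏ k : ZMod p, ((a * b ^ i.val) ^ k.val) • x :=
          (Finset.prod_eq_one fun i _ => hline i).symm
      _ = ∏ i : ZMod p, ∏ k : ZMod p, (a ^ k.val * b ^ ((i * k).val)) • x :=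
          Finset.prod_congr rfl fun i _ => Finset.prod_congr rfl fun k _ => hrw i k
      _ = ∏ k : ZMod p, ∏ i : ZMod p, (a ^ k.val * b ^ ((i * k).val)) • x := Finset.prod_comm
      _ = (∏ i : ZMod p, (a ^ ((0 : ZMod p)).val * b ^ ((i * 0).val)) • x) *
            ∏ k ∈ ({(0 : ZMod p)}ᶜ : Finset (ZMod p)),
              ∏ i : ZMod p, (a ^ k.val * b ^ ((i * k).val)) • x :=
          Fintype.prod_eq_mul_prod_compl 0 _
      _ = x ^ p * ∏ k ∈ ({(0 : ZMod p)}ᶜ : Finset (ZMod p)), g k := by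
          rw [hF0]
          congr 1
          refine Finset.prod_congr rfl fun k hk => ?_
          exact hk0 k (by simpa using hk)
  have hU2 : (∏ k ∈ ({(0 : ZMod p)}ᶜ : Finset (ZMod p)), g k) = 1 := by
    have := Fintype.prod_eq_mul_prod_compl (0 : ZMod p) g
    rw [hUval, hg0, one_mul] at this
    exact this.symm
  rw [hU2, mul_one] at hT2
  exact hT2.symm

end BaseCase


section MainInduction

universe u v

theorem stmt0_aux {r p : ℕ} (hr : r.Prime) (hp : p.Prime) :
    ∀ (n : ℕ) (R : Type u) (A : Type v) [Group R] [Group A] [Finite R] [Finite A]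
      [MulDistribMulAction A R], Nat.card R ≤ n →
      IsPGroup r R → (∀ x y : A, x * y = y * x) → IsPGroup p A → ¬ IsCyclic A →
      IsGoodAction A R → (⊤ : Subgroup R) = ⨆ (a : A) (_ : a ≠ 1), fixedPointsOf A R a := by
  intro n
  induction n with
  | zero =>
    intro R A _ _ _ _ _ hcard _ _ _ _ _
    have : 0 < Nat.card R := Nat.card_pos
    omega
  | succ n ih =>
    intro R A _ _ _ _ _ hcard hR hAcomm hAp hAnc hgood
    set S := ⨆ (a : A) (_ : a ≠ 1), fixedPointsOf A R a with hSdef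
    have hSmem : ∀ (a : A), a ≠ 1 → fixedPointsOf A R a ≤ S :=
      fun a ha => le_iSup₂ (f := fun (a : A) (_ : a ≠ 1) => fixedPointsOf A R a) a ha
    have hSinv : ∀ (b : A) (y : R), y ∈ S → b • y ∈ S := by
      intro b y hy
      refine Subgroup.iSup_induction _ (C := fun z => b • z ∈ S) hy ?_ ?_ ?_
      · intro a z hz
        by_cases ha : a = 1
        · subst ha
          rw [iSup_neg (by simp)] at hz
          have : z = 1 := Subgroup.mem_bot.mp hz
          subst this
          rw [smul_one]
          exact Subgroup.one_mem S
        · rw [iSup_pos ha] at hz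
          refine hSmem a ha ?_
          show a • (b • z) = b • z
          rw [← mul_smul, hAcomm a b, mul_smul, (hz : a • z = z)]
      · show b • (1 : R) ∈ S
        rw [smul_one]; exact Subgroup.one_mem S
      · intro u v hu hv
        show b • (u * v) ∈ S
        rw [smul_mul']
        exact Subgroup.mul_mem S hu hv
    by_cases htriv : Subsingleton R
    · ext x
      have hx : x = 1 := Subsingleton.elim x 1
      subst hx
      simp [Subgroup.one_mem]
    haveI : Nontrivial R := not_subsingleton_iff_nontrivial.mp htriv
    haveI : Fact r.Prime := ⟨hr⟩
    haveI := Fintype.ofFinite R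
    by_cases hN : ∃ N : Subgroup R, N ≠ ⊥ ∧ N ≠ ⊤ ∧ N.Normal ∧ ∀ (a : A), ∀ x ∈ N, a • x ∈ N
    · obtain ⟨N, hNbot, hNtop, hNnorm, hNinv⟩ := hN
      haveI := hNnorm
      -- Step A : N ≤ S by induction applied to the restricted action
      letI instN : MulDistribMulAction A ↥N := subAction N hNinv
      have hequiN : ∀ (a : A) (x : ↥N), N.subtype (a • x) = a • (N.subtype x) := fun a x => rfl
      have hgoodN : IsGoodAction A ↥N :=
        isGoodAction_of_injective N.subtype N.subtype_injective hequiN hgood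
      have hcardN : Nat.card ↥N ≤ n := by
        have h1 : Nat.card ↥N ∣ Nat.card R := Subgroup.card_subgroup_dvd_card N
        have h2 : Nat.card ↥N ≠ Nat.card R := fun h => hNtop (Subgroup.eq_top_of_card_eq N h)
        have h3 : 0 < Nat.card R := Nat.card_pos
        have h4 := Nat.le_of_dvd h3 h1
        omega
      have hNS : N ≤ S := by
        have htopN := ih ↥N A hcardN (hR.to_subgroup N) hAcomm hAp hAnc hgoodN
        intro x hx
        have hmem : (⟨x, hx⟩ : ↥N) ∈ (⊤ : Subgroup ↥N) := Subgroup.mem_top _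
        rw [htopN] at hmem
        have hmap : x ∈ Subgroup.map N.subtype (⨆ (a : A) (_ : a ≠ 1), fixedPointsOf A ↥N a) :=
          ⟨_, hmem, rfl⟩
        have hle : Subgroup.map N.subtype (⨆ (a : A) (_ : a ≠ 1), fixedPointsOf A ↥N a) ≤ S := by
          rw [Subgroup.map_iSup]
          refine iSup_le fun a => ?_
          rw [Subgroup.map_iSup]
          refine iSup_le fun ha => le_trans ?_ (hSmem a ha)
          rintro _ ⟨y, hy, rfl⟩
          show a • (N.subtype y) = N.subtype y
          exact congrArg Subtype.val (hy : a • y = y)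
        exact hle hmap
      -- Step B : R = S ⊔ N via the quotient
      letI instQ : MulDistribMulAction A (R ⧸ N) := quotAction N hNinv
      have hequiQ : ∀ (a : A) (x : R),
          (QuotientGroup.mk' N) (a • x) = a • ((QuotientGroup.mk' N) x) := by
        intro a x
        show QuotientGroup.mk (a • x) = QuotientGroup.map N N
          (MulDistribMulAction.toMonoidHom R a)
          (@id (N ≤ N.comap (MulDistribMulAction.toMonoidHom R a)) (fun y hy => hNinv a y hy))
          (QuotientGroup.mk x)
        rw [QuotientGroup.map_mk]
        rfl
      have hgoodQ : IsGoodAction A (R ⧸ N) :=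
        isGoodAction_of_surjective (QuotientGroup.mk' N) (QuotientGroup.mk'_surjective N)
          hequiQ hgood
      have hcardQ : Nat.card (R ⧸ N) ≤ n := by
        have h0 := Subgroup.card_eq_card_quotient_mul_card_subgroup N
        haveI : Nontrivial ↥N := (Subgroup.nontrivial_iff_ne_bot N).mpr hNbot
        have h2 : 1 < Nat.card ↥N := Finite.one_lt_card_iff_nontrivial.mpr inferInstance
        have hqpos : 0 < Nat.card (R ⧸ N) := Nat.card_pos
        nlinarith [h0, h2, hqpos, hcard]
      have htopQ := ih (R ⧸ N) A hcardQ (hR.to_quotient N) hAcomm hAp hAnc hgoodQ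
      have hlift : ∀ a : A, fixedPointsOf A (R ⧸ N) a ≤
          (fixedPointsOf A R a).map (QuotientGroup.mk' N) :=
        fixedPointsOf_le_map (QuotientGroup.mk' N) (QuotientGroup.mk'_surjective N) hequiQ hgood
      refine ((Subgroup.eq_top_iff' S).mpr ?_).symm
      intro x
      have hq : (QuotientGroup.mk' N) x ∈ (⊤ : Subgroup (R ⧸ N)) := Subgroup.mem_top _
      rw [htopQ] at hq
      have hle2 : (⨆ (a : A) (_ : a ≠ 1), fixedPointsOf A (R ⧸ N) a) ≤
          Subgroup.map (QuotientGroup.mk' N) S :=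
        iSup_le fun a => iSup_le fun ha =>
          le_trans (hlift a) (Subgroup.map_mono (hSmem a ha))
      obtain ⟨s, hs, hsx⟩ := hle2 hq
      have hmemN : s⁻¹ * x ∈ N := by
        rw [← QuotientGroup.eq]
        exact hsx
      have hxe : x = s * (s⁻¹ * x) := by group
      rw [hxe]
      exact S.mul_mem hs (hNS hmemN)
    · -- no proper nontrivial invariant normal subgroup
      have key : ∀ M : Subgroup R, M.Normal → (∀ (a : A), ∀ x ∈ M, a • x ∈ M) →
          M = ⊥ ∨ M = ⊤ := by
        intro M hnorm hinv
        by_contra hcontra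
        push_neg at hcontra
        exact hN ⟨M, hcontra.1, hcontra.2, hnorm, hinv⟩
      have hZinv : ∀ (a : A), ∀ x ∈ Subgroup.center R, a • x ∈ Subgroup.center R := by
        intro a x hx
        rw [Subgroup.mem_center_iff] at hx ⊢
        intro g
        have hgx := hx (a⁻¹ • g)
        calc g * a • x = a • (a⁻¹ • g) * a • x := by rw [smul_inv_smul]
          _ = a • ((a⁻¹ • g) * x) := (smul_mul' a _ _).symm
          _ = a • (x * (a⁻¹ • g)) := by rw [hgx]
          _ = a • x * a • (a⁻¹ • g) := smul_mul' a _ _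
          _ = a • x * g := by rw [smul_inv_smul]
      have hZ : Subgroup.center R = ⊤ := by
        rcases key (Subgroup.center R) inferInstance hZinv with h | h
        · exfalso
          have hnt : Nontrivial (Subgroup.center R) := hR.center_nontrivial
          exact (Subgroup.nontrivial_iff_ne_bot _).mp hnt h
        · exact h
      have hRcomm : ∀ x y : R, x * y = y * x := by
        intro x y
        have hy : y ∈ Subgroup.center R := hZ ▸ Subgroup.mem_top y
        exact Subgroup.mem_center_iff.mp hy x
      have hSnormal : S.Normal := by
        constructor
        intro s hs g
        have : g * s * g⁻¹ = s := by
          rw [hRcomm g s, mul_assoc, mul_inv_cancel, mul_one]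
        rw [this]
        exact hs
      rcases key S hSnormal (fun a x hx => hSinv a x hx) with hSbot | hStop
      swap
      · exact hStop.symm
      exfalso
      have hCx : ∀ c : A, c ≠ 1 → ∀ y : R, c • y = y → y = 1 := by
        intro c hc y hy
        have hyS : y ∈ S := hSmem c hc hy
        rw [hSbot] at hyS
        exact Subgroup.mem_bot.mp hyS
      haveI : Nontrivial A := by
        rcases subsingleton_or_nontrivial A with h | h
        · exact absurd isCyclic_of_subsingleton hAnc
        · exact h
      by_cases hrp : r = p
      · -- r = p : counting fixed points
        subst hrp
        have hmodeq := hAp.card_modEq_card_fixedPoints R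
        have hdvd : r ∣ Nat.card R := by
          obtain ⟨k, hk⟩ := IsPGroup.iff_card.mp hR
          rw [hk]
          refine dvd_pow_self r ?_
          intro h0
          rw [h0, pow_zero] at hk
          exact (Finite.one_lt_card_iff_nontrivial.mpr inferInstance).ne' hk
        have hfpdvd : r ∣ Nat.card (MulAction.fixedPoints A R) :=
          Nat.modEq_zero_iff_dvd.mp (hmodeq.symm.trans (Nat.modEq_zero_iff_dvd.mpr hdvd))
        have h1fp : (1 : R) ∈ MulAction.fixedPoints A R := fun c => smul_one c
        haveI : Nonempty (MulAction.fixedPoints A R) := ⟨⟨1, h1fp⟩⟩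
        have hpos : 0 < Nat.card (MulAction.fixedPoints A R) := Nat.card_pos
        have h2 : 1 < Nat.card (MulAction.fixedPoints A R) :=
          lt_of_lt_of_le hr.one_lt (Nat.le_of_dvd hpos hfpdvd)
        haveI hnt := Finite.one_lt_card_iff_nontrivial.mp h2
        obtain ⟨u, hu⟩ := exists_ne (⟨1, h1fp⟩ : MulAction.fixedPoints A R)
        obtain ⟨c, hc⟩ := exists_ne (1 : A)
        have := hCx c hc u.1 (u.2 c)
        exact hu (Subtype.ext this)
      · -- r ≠ p : the averaging argument
        obtain ⟨a, b, ha, hb, hba', hab'⟩ := exists_indep hp hAcomm hAp hAnc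
        obtain ⟨y0, hy0⟩ := exists_ne (1 : R)
        have hap : a ^ p = 1 := by rw [← ha]; exact pow_orderOf_eq_one a
        have hbp : b ^ p = 1 := by rw [← hb]; exact pow_orderOf_eq_one b
        have hxp : y0 ^ p = 1 :=
          base_pow_eq_one hp hRcomm hCx (hAcomm a b) hap hbp hba' hab' y0
        have hdvd : orderOf y0 ∣ p := orderOf_dvd_of_pow_eq_one hxp
        obtain ⟨k, hk⟩ := hR y0
        have h2 : orderOf y0 ∣ r ^ k := orderOf_dvd_of_pow_eq_one hk
        rcases hp.eq_one_or_self_of_dvd _ hdvd with h | h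
        · exact hy0 (orderOf_eq_one_iff.mp h)
        · have hpr : p ∣ r ^ k := h ▸ h2
          exact hrp ((Nat.prime_dvd_prime_iff_eq hp hr).mp (hp.dvd_of_dvd_pow hpr)).symm

end MainInduction

/-- If a noncyclic abelian `p`-group `A` acts faithfully and goodly on a
finite `r`-group `R`, then `R = ⟨ C_R(a) : 1 ≠ a ∈ A ⟩`. -/
theorem stmt0 {r p : ℕ} (hr : r.Prime) (hp : p.Prime)
    (R A : Type*) [Group R] [Group A] [Finite R] [Finite A] [MulDistribMulAction A R]
    (hR : IsPGroup r R)
    (hAcomm : ∀ x y : A, x * y = y * x) (hAp : IsPGroup p A) (hAnc : ¬ IsCyclic A)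
    (hfaithful : ∀ a : A, (∀ g : R, a • g = g) → a = 1)
    (hgood : IsGoodAction A R) :
    (⊤ : Subgroup R) = ⨆ (a : A) (_ : a ≠ 1), fixedPointsOf A R a := by
  exact stmt0_aux hr hp (Nat.card R) R A le_rfl hR hAcomm hAp hAnc hgood
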